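/- arXiv:0906.4514 — 2 statements merged into one kernel-verified Lean document; each statement's English description precedes it below -/
import Mathlib

section
/- For I(x) = (x+δ)²/(2σ²) and z ≥ δ/6, the function ψ*(t) = 3(z + δ/2)(t − t²/2) − δt on [0,1] satisfies ψ*(0)=0, ψ* ≥ 0 on [0,1], ∫₀¹ ψ*(t) dt = z, ψ*'(1) = −δ, and ∫₀¹ I(ψ*'(t)) dt = (3/(2σ²))(z + δ/2)². -/
open Set Real

theorem gaussian_optimal_path_large_z
    (δ σ z : ℝ) (hδ : 0 < δ) (hσ : 0 < σ) (hz : δ / 6 ≤ z)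
    (I ψ : ℝ → ℝ)
    (hI : ∀ x, I x = (x + δ) ^ 2 / (2 * σ ^ 2))
    (hψ : ∀ t, ψ t = 3 * (z + δ / 2) * (t - t ^ 2 / 2) - δ * t) :
    ψ 0 = 0 ∧
    (∀ t ∈ Icc (0:ℝ) 1, 0 ≤ ψ t) ∧
    (∫ t in (0:ℝ)..1, ψ t) = z ∧
    deriv ψ 1 = -δ ∧
    (∫ t in (0:ℝ)..1, I (deriv ψ t)) = 3 / (2 * σ ^ 2) * (z + δ / 2) ^ 2 := by
  set c := 3 * (z + δ / 2) with hc
  have hψfun : ψ = fun t => c * (t - t ^ 2 / 2) - δ * t := funext hψ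
  have hder : ∀ t : ℝ, HasDerivAt ψ (c * (1 - t) - δ) t := by
    intro t
    rw [hψfun]
    have h1 : HasDerivAt (fun t : ℝ => t - t ^ 2 / 2) (1 - t) t := by
      exact ((hasDerivAt_id t).sub ((hasDerivAt_pow 2 t).div_const 2)).congr_deriv (by simp)
    exact ((h1.const_mul c).sub ((hasDerivAt_id t).const_mul δ)).congr_deriv (by simp)
  have hderiv : deriv ψ = fun t => c * (1 - t) - δ := funext fun t => (hder t).deriv
  have hcδ : 2 * δ ≤ c := by rw [hc]; nlinarith
  refine ⟨by rw [hψ]; ring, ?_, ?_, ?_, ?_⟩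
  · rintro t ⟨ht0, ht1⟩
    rw [hψ]
    have h1 : 0 ≤ c * (1 - t / 2) - δ := by
      nlinarith [mul_nonneg (by linarith : (0:ℝ) ≤ c) (by linarith : (0:ℝ) ≤ 1 - t)]
    nlinarith [mul_nonneg ht0 h1]
  · rw [hψfun]
    have hFTC : (∫ t in (0:ℝ)..1, (c * (t - t ^ 2 / 2) - δ * t)) =
        (c * (1 ^ 2 / 2 - 1 ^ 3 / 6) - δ * 1 ^ 2 / 2)
          - (c * (0 ^ 2 / 2 - 0 ^ 3 / 6) - δ * 0 ^ 2 / 2) := by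
      apply intervalIntegral.integral_eq_sub_of_hasDerivAt
        (f := fun t : ℝ => c * (t ^ 2 / 2 - t ^ 3 / 6) - δ * t ^ 2 / 2)
      · intro t _
        have h1 : HasDerivAt (fun t : ℝ => c * (t ^ 2 / 2 - t ^ 3 / 6) - δ * t ^ 2 / 2)
            (c * (t - t ^ 2 / 2) - δ * t) t := by
          have := (((((hasDerivAt_pow 2 t).div_const 2).sub
            ((hasDerivAt_pow 3 t).div_const 6)).const_mul c).sub
            (((hasDerivAt_pow 2 t).const_mul δ).div_const 2))
          exact this.congr_deriv (by push_cast; ring)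
        exact h1
      · exact ((by continuity : Continuous fun t : ℝ =>
          c * (t - t ^ 2 / 2) - δ * t).intervalIntegrable 0 1)
    rw [hFTC, hc]; ring
  · rw [hderiv]; ring
  · have hcongr : (∫ t in (0:ℝ)..1, I (deriv ψ t)) =
        ∫ t in (0:ℝ)..1, c ^ 2 / (2 * σ ^ 2) * (1 - t) ^ 2 := by
      apply intervalIntegral.integral_congr
      intro t _
      show I (deriv ψ t) = c ^ 2 / (2 * σ ^ 2) * (1 - t) ^ 2
      rw [hderiv, hI]
      ring
    have hFTC : (∫ t in (0:ℝ)..1, c ^ 2 / (2 * σ ^ 2) * (1 - t) ^ 2) =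
        (c ^ 2 / (2 * σ ^ 2) * (1 - 1 ^ 2 + 1 ^ 3 / 3))
          - (c ^ 2 / (2 * σ ^ 2) * (0 - 0 ^ 2 + 0 ^ 3 / 3)) := by
      apply intervalIntegral.integral_eq_sub_of_hasDerivAt
        (f := fun t : ℝ => c ^ 2 / (2 * σ ^ 2) * (t - t ^ 2 + t ^ 3 / 3))
      · intro t _
        have h1 : HasDerivAt (fun t : ℝ => c ^ 2 / (2 * σ ^ 2) * (t - t ^ 2 + t ^ 3 / 3))
            (c ^ 2 / (2 * σ ^ 2) * (1 - t) ^ 2) t := by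
          have := ((((hasDerivAt_id t).sub (hasDerivAt_pow 2 t)).add
            ((hasDerivAt_pow 3 t).div_const 3)).const_mul (c ^ 2 / (2 * σ ^ 2)))
          exact this.congr_deriv (by push_cast; ring)
        exact h1
      · exact ((by continuity : Continuous fun t : ℝ =>
          c ^ 2 / (2 * σ ^ 2) * (1 - t) ^ 2).intervalIntegrable 0 1)
    rw [hcongr, hFTC, hc]
    have hσ2 : σ ^ 2 ≠ 0 := by positivity
    field_simp
    ring
end

section
/- Suppose I : ℝ → [0,∞] is convex lower semicontinuous with I(−δ) = 0 for some δ > 0, and ψ, ψ⁰ : [0,1] → ℝ are absolutely continuous non-negative, where ψ⁰ is the concave majorant-type replacement with ∫₀¹ I(ψ⁰'(t)) dt computed via a rearrangement of the derivative of ψ into non-increasing order. Then ∫₀¹ I((ψ⁰)'(t)) dt ≤ ∫₀¹ I(ψ'(t)) dt and ∫₀¹ ψ⁰(t) dt ≥ ∫₀¹ ψ(t) dt. (Rearranging the derivative in decreasing order preserves the integral cost and increases area when endpoints match.) -/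
open Set Real MeasureTheory

theorem decreasing_rearrangement_improves
    (δ : ℝ) (hδ : 0 < δ)
    (I : ℝ → ℝ) (hIconv : ConvexOn ℝ univ I) (hInn : ∀ x, 0 ≤ I x)
    (hIδ : I (-δ) = 0)
    (ψ ψ₀ g g₀ : ℝ → ℝ)
    (hψd : ∀ t ∈ Icc (0:ℝ) 1, HasDerivAt ψ (g t) t)
    (hψ₀d : ∀ t ∈ Icc (0:ℝ) 1, HasDerivAt ψ₀ (g₀ t) t)
    (hψ0 : ψ 0 = 0) (hψ1 : ψ 1 = 0) (hψnn : ∀ t ∈ Icc (0:ℝ) 1, 0 ≤ ψ t)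
    (hψ₀0 : ψ₀ 0 = 0)
    (hg₀anti : AntitoneOn g₀ (Icc (0:ℝ) 1))
    (hrearr : ∀ c : ℝ,
      volume {t ∈ Icc (0:ℝ) 1 | g t ≤ c} = volume {t ∈ Icc (0:ℝ) 1 | g₀ t ≤ c})
    (hgint : IntegrableOn (fun t => I (g t)) (Icc (0:ℝ) 1))
    (hg₀int : IntegrableOn (fun t => I (g₀ t)) (Icc (0:ℝ) 1)) :
    (∫ t in Icc (0:ℝ) 1, I (g₀ t)) ≤ (∫ t in Icc (0:ℝ) 1, I (g t)) ∧
    (∫ t in Icc (0:ℝ) 1, ψ t) ≤ (∫ t in Icc (0:ℝ) 1, ψ₀ t) := by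
  have hIcont : Continuous I := hIconv.locallyLipschitz.continuous
  set f : ℝ → ℝ := deriv ψ with hfdef
  set f₀ : ℝ → ℝ := deriv ψ₀ with hf₀def
  have hfg : ∀ t ∈ Icc (0:ℝ) 1, f t = g t := fun t ht => (hψd t ht).deriv
  have hfg₀ : ∀ t ∈ Icc (0:ℝ) 1, f₀ t = g₀ t := fun t ht => (hψ₀d t ht).deriv
  have hfm : Measurable f := measurable_deriv ψ
  have hf₀m : Measurable f₀ := measurable_deriv ψ₀
  set ρ : Measure ℝ := volume.restrict (Icc (0:ℝ) 1) with hρdef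
  have hρfin : IsFiniteMeasure ρ := by
    constructor
    rw [hρdef, Measure.restrict_apply_univ]
    exact measure_Icc_lt_top
  set μ1 : Measure ℝ := ρ.map f with hμ1def
  set μ2 : Measure ℝ := ρ.map f₀ with hμ2def
  have hset : ∀ c : ℝ, f ⁻¹' (Iic c) ∩ Icc (0:ℝ) 1 = {t ∈ Icc (0:ℝ) 1 | g t ≤ c} := by
    intro c; ext t
    constructor
    · rintro ⟨h1, h2⟩; exact ⟨h2, by rw [← hfg t h2]; exact h1⟩
    · rintro ⟨h1, h2⟩; exact ⟨by rw [mem_preimage, mem_Iic, hfg t h1]; exact h2, h1⟩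
  have hset₀ : ∀ c : ℝ, f₀ ⁻¹' (Iic c) ∩ Icc (0:ℝ) 1 = {t ∈ Icc (0:ℝ) 1 | g₀ t ≤ c} := by
    intro c; ext t
    constructor
    · rintro ⟨h1, h2⟩; exact ⟨h2, by rw [← hfg₀ t h2]; exact h1⟩
    · rintro ⟨h1, h2⟩; exact ⟨by rw [mem_preimage, mem_Iic, hfg₀ t h1]; exact h2, h1⟩
  have hμ1fin : IsFiniteMeasure μ1 := by
    constructor
    rw [hμ1def, Measure.map_apply hfm MeasurableSet.univ, preimage_univ]
    exact (measure_lt_top ρ univ)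
  have hμeq : μ1 = μ2 := by
    refine Measure.ext_of_Iic μ1 μ2 fun c => ?_
    rw [hμ1def, hμ2def, Measure.map_apply hfm measurableSet_Iic,
      Measure.map_apply hf₀m measurableSet_Iic, hρdef,
      Measure.restrict_apply (hfm measurableSet_Iic),
      Measure.restrict_apply (hf₀m measurableSet_Iic), hset c, hset₀ c]
    exact hrearr c
  -- transfer of integrals for any continuous function
  have key : ∀ h : ℝ → ℝ, Continuous h →
      (∫ t in Icc (0:ℝ) 1, h (g t)) = ∫ t in Icc (0:ℝ) 1, h (g₀ t) := by
    intro h hh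
    have e1 : (∫ x, h x ∂μ1) = ∫ t in Icc (0:ℝ) 1, h (f t) :=
      integral_map hfm.aemeasurable hh.aestronglyMeasurable
    have e2 : (∫ x, h x ∂μ2) = ∫ t in Icc (0:ℝ) 1, h (f₀ t) :=
      integral_map hf₀m.aemeasurable hh.aestronglyMeasurable
    have e3 : (∫ t in Icc (0:ℝ) 1, h (f t)) = ∫ t in Icc (0:ℝ) 1, h (g t) :=
      setIntegral_congr_fun measurableSet_Icc fun t ht => by simp [hfg t ht]
    have e4 : (∫ t in Icc (0:ℝ) 1, h (f₀ t)) = ∫ t in Icc (0:ℝ) 1, h (g₀ t) :=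
      setIntegral_congr_fun measurableSet_Icc fun t ht => by simp [hfg₀ t ht]
    rw [← e3, ← e1, ← e4, ← e2, hμeq]
  constructor
  · exact (key I hIcont).ge
  -- Part 2
  set A : ℝ := g₀ 0 with hA
  set B : ℝ := g₀ 1 with hB
  have h01 : (0:ℝ) ∈ Icc (0:ℝ) 1 := ⟨le_refl 0, zero_le_one⟩
  have h11 : (1:ℝ) ∈ Icc (0:ℝ) 1 := ⟨zero_le_one, le_refl 1⟩
  have hg₀bound : ∀ t ∈ Icc (0:ℝ) 1, B ≤ g₀ t ∧ g₀ t ≤ A := fun t ht =>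
    ⟨hg₀anti ht h11 ht.2, hg₀anti h01 ht ht.1⟩
  -- a.e. bounds on f over [0,1]
  have hupper : ∀ᵐ t ∂ρ, f t ≤ A := by
    have h1 : volume ({t ∈ Icc (0:ℝ) 1 | g t ≤ A}) = volume (Icc (0:ℝ) 1) := by
      rw [hrearr A]
      congr 1
      ext t
      exact ⟨fun ht => ht.1, fun ht => ⟨ht, (hg₀bound t ht).2⟩⟩
    have hS : volume (f ⁻¹' (Iic A) ∩ Icc (0:ℝ) 1) = volume (Icc (0:ℝ) 1) := by
      rw [hset A]; exact h1
    rw [hρdef, ae_restrict_iff' measurableSet_Icc]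
    have hcompl : volume (Icc (0:ℝ) 1 \ (f ⁻¹' (Iic A) ∩ Icc (0:ℝ) 1)) = 0 := by
      rw [measure_diff inter_subset_right
        ((hfm measurableSet_Iic).inter measurableSet_Icc).nullMeasurableSet
        (by rw [hS]; exact measure_Icc_lt_top.ne), hS, tsub_self]
    rw [ae_iff]
    refine measure_mono_null (fun t ht => ?_) hcompl
    simp only [mem_setOf_eq, not_forall, not_le] at ht
    obtain ⟨ht1, ht2⟩ := ht
    exact ⟨ht1, fun hmem => (not_le.mpr ht2) hmem.1⟩
  have hlower : ∀ᵐ t ∂ρ, B ≤ f t := by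
    have hn : ∀ n : ℕ, volume (f ⁻¹' (Iic (B - 1/(n+1))) ∩ Icc (0:ℝ) 1) = 0 := by
      intro n
      rw [hset (B - 1/(n+1)), hrearr (B - 1/(n+1))]
      have : {t ∈ Icc (0:ℝ) 1 | g₀ t ≤ B - 1/(n+1)} = (∅ : Set ℝ) := by
        ext t
        simp only [mem_setOf_eq, mem_empty_iff_false, iff_false, not_and]
        intro ht hle
        have h1 : B ≤ g₀ t := (hg₀bound t ht).1
        have h2 : (0:ℝ) < 1/(n+1) := by positivity
        linarith
      rw [this, measure_empty]
    have hunion : volume (⋃ n : ℕ, f ⁻¹' (Iic (B - 1/(n+1))) ∩ Icc (0:ℝ) 1) = 0 :=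
      measure_iUnion_null hn
    rw [hρdef, ae_restrict_iff' measurableSet_Icc, ae_iff]
    refine measure_mono_null (fun t ht => ?_) hunion
    simp only [mem_setOf_eq, not_forall, not_le] at ht
    obtain ⟨ht1, ht2⟩ := ht
    obtain ⟨n, hn'⟩ := exists_nat_one_div_lt (sub_pos.mpr ht2)
    exact mem_iUnion.mpr ⟨n, ⟨by simp only [mem_preimage, mem_Iic]; linarith, ht1⟩⟩
  -- integrability of f, f₀ on [0,1]
  have hCbound : ∀ x : ℝ, B ≤ x → x ≤ A → ‖x‖ ≤ |A| + |B| := by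
    intro x h1 h2
    rw [Real.norm_eq_abs, abs_le]
    constructor
    · have := neg_abs_le B; linarith [abs_nonneg A]
    · have := le_abs_self A; linarith [abs_nonneg B]
  have hfint : IntegrableOn f (Icc (0:ℝ) 1) := by
    refine Integrable.mono' (integrable_const (|A| + |B|)) hfm.aestronglyMeasurable ?_
    filter_upwards [hupper, hlower] with t h1 h2
    exact hCbound (f t) h2 h1
  have hf₀int : IntegrableOn f₀ (Icc (0:ℝ) 1) := by
    refine Integrable.mono' (integrable_const (|A| + |B|)) hf₀m.aestronglyMeasurable ?_
    refine (ae_restrict_iff' measurableSet_Icc).mpr (Filter.Eventually.of_forall fun t ht => ?_)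
    rw [hfg₀ t ht]
    exact hCbound (g₀ t) (hg₀bound t ht).1 (hg₀bound t ht).2
  -- FTC
  have hsub : ∀ t ∈ Icc (0:ℝ) 1, Icc (0:ℝ) t ⊆ Icc (0:ℝ) 1 :=
    fun t ht => Icc_subset_Icc le_rfl ht.2
  have hFTC : ∀ t ∈ Icc (0:ℝ) 1, ψ t = ∫ s in (0:ℝ)..t, f s := by
    intro t ht
    have huIcc : uIcc (0:ℝ) t = Icc (0:ℝ) t := uIcc_of_le ht.1
    have := intervalIntegral.integral_eq_sub_of_hasDerivAt
      (f := ψ) (f' := f) (a := (0:ℝ)) (b := t)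
      (fun s hs => by
        rw [huIcc] at hs
        rw [hfg s (hsub t ht hs)]
        exact hψd s (hsub t ht hs))
      (by refine IntegrableOn.intervalIntegrable ?_
          rw [huIcc]; exact hfint.mono_set (hsub t ht))
    rw [hψ0, sub_zero] at this
    exact this.symm
  have hFTC₀ : ∀ t ∈ Icc (0:ℝ) 1, ψ₀ t = ∫ s in (0:ℝ)..t, f₀ s := by
    intro t ht
    have huIcc : uIcc (0:ℝ) t = Icc (0:ℝ) t := uIcc_of_le ht.1
    have := intervalIntegral.integral_eq_sub_of_hasDerivAt
      (f := ψ₀) (f' := f₀) (a := (0:ℝ)) (b := t)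
      (fun s hs => by
        rw [huIcc] at hs
        rw [hfg₀ s (hsub t ht hs)]
        exact hψ₀d s (hsub t ht hs))
      (by refine IntegrableOn.intervalIntegrable ?_
          rw [huIcc]; exact hf₀int.mono_set (hsub t ht))
    rw [hψ₀0, sub_zero] at this
    exact this.symm
  -- pointwise comparison via Hardy-Littlewood argument
  have hpt : ∀ t ∈ Icc (0:ℝ) 1, ψ t ≤ ψ₀ t := by
    intro t ht
    set c : ℝ := g₀ t with hc
    set p : ℝ → ℝ := fun x => max (x - c) 0 with hp
    have hpc : Continuous p := (continuous_id.sub continuous_const).max continuous_const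
    have hconstint : IntegrableOn (fun _ : ℝ => c) (Icc (0:ℝ) 1) :=
      integrableOn_const measure_Icc_lt_top.ne
    have hpfint : IntegrableOn (fun s => p (f s)) (Icc (0:ℝ) 1) := by
      refine Integrable.mono' ((hfint.sub hconstint).abs)
        ((hpc.measurable.comp hfm).aestronglyMeasurable)
        (Filter.Eventually.of_forall fun s => ?_)
      simp only [hp, Real.norm_eq_abs]
      rw [abs_of_nonneg (le_max_right _ _)]
      exact max_le (le_abs_self _) (abs_nonneg _)
    have hpf₀int : IntegrableOn (fun s => p (f₀ s)) (Icc (0:ℝ) 1) := by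
      refine Integrable.mono' ((hf₀int.sub hconstint).abs)
        ((hpc.measurable.comp hf₀m).aestronglyMeasurable)
        (Filter.Eventually.of_forall fun s => ?_)
      simp only [hp, Real.norm_eq_abs]
      rw [abs_of_nonneg (le_max_right _ _)]
      exact max_le (le_abs_self _) (abs_nonneg _)
    have hii : IntervalIntegrable f volume 0 t := by
      refine IntegrableOn.intervalIntegrable ?_
      rw [uIcc_of_le ht.1]; exact hfint.mono_set (hsub t ht)
    have hii₀ : IntervalIntegrable f₀ volume 0 t := by
      refine IntegrableOn.intervalIntegrable ?_
      rw [uIcc_of_le ht.1]; exact hf₀int.mono_set (hsub t ht)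
    have hpii : ∀ a b : ℝ, a ∈ Icc (0:ℝ) 1 → b ∈ Icc (0:ℝ) 1 → a ≤ b →
        IntervalIntegrable (fun s => p (f s)) volume a b := by
      intro a b ha hb hab
      refine IntegrableOn.intervalIntegrable ?_
      rw [uIcc_of_le hab]
      exact hpfint.mono_set (Icc_subset_Icc ha.1 hb.2)
    have hpii₀ : ∀ a b : ℝ, a ∈ Icc (0:ℝ) 1 → b ∈ Icc (0:ℝ) 1 → a ≤ b →
        IntervalIntegrable (fun s => p (f₀ s)) volume a b := by
      intro a b ha hb hab
      refine IntegrableOn.intervalIntegrable ?_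
      rw [uIcc_of_le hab]
      exact hpf₀int.mono_set (Icc_subset_Icc ha.1 hb.2)
    have s1 : (∫ s in (0:ℝ)..t, (f s - c)) ≤ ∫ s in (0:ℝ)..t, p (f s) :=
      intervalIntegral.integral_mono_on ht.1 (hii.sub intervalIntegrable_const)
        (hpii 0 t h01 ht ht.1) (fun s _ => le_max_left _ _)
    have s2 : (∫ s in (0:ℝ)..t, p (f s)) ≤ ∫ s in (0:ℝ)..1, p (f s) := by
      have hsplit := intervalIntegral.integral_add_adjacent_intervals
        (hpii 0 t h01 ht ht.1) (hpii t 1 ht h11 ht.2)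
      have hnn : 0 ≤ ∫ s in t..(1:ℝ), p (f s) :=
        intervalIntegral.integral_nonneg ht.2 (fun s _ => le_max_right _ _)
      linarith
    have s3 : (∫ s in (0:ℝ)..1, p (f s)) = ∫ s in (0:ℝ)..1, p (f₀ s) := by
      rw [intervalIntegral.integral_of_le zero_le_one,
        intervalIntegral.integral_of_le zero_le_one,
        ← integral_Icc_eq_integral_Ioc, ← integral_Icc_eq_integral_Ioc]
      calc (∫ s in Icc (0:ℝ) 1, p (f s)) = ∫ s in Icc (0:ℝ) 1, p (g s) :=
            setIntegral_congr_fun measurableSet_Icc (fun s hs => by rw [hfg s hs])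
        _ = ∫ s in Icc (0:ℝ) 1, p (g₀ s) := key p hpc
        _ = ∫ s in Icc (0:ℝ) 1, p (f₀ s) :=
            (setIntegral_congr_fun measurableSet_Icc (fun s hs => by rw [hfg₀ s hs])).symm
    have s4 : (∫ s in (0:ℝ)..1, p (f₀ s)) = ∫ s in (0:ℝ)..t, p (f₀ s) := by
      have hsplit := intervalIntegral.integral_add_adjacent_intervals
        (hpii₀ 0 t h01 ht ht.1) (hpii₀ t 1 ht h11 ht.2)
      have hz : (∫ s in t..(1:ℝ), p (f₀ s)) = 0 := by
        rw [intervalIntegral.integral_congr (g := fun _ => (0:ℝ)) ?_]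
        · exact intervalIntegral.integral_zero
        · intro s hs
          rw [uIcc_of_le ht.2] at hs
          have hs1 : s ∈ Icc (0:ℝ) 1 := ⟨le_trans ht.1 hs.1, hs.2⟩
          simp only [hp, hfg₀ s hs1]
          exact max_eq_right (sub_nonpos.mpr (hg₀anti ht hs1 hs.1))
      linarith
    have s5 : (∫ s in (0:ℝ)..t, p (f₀ s)) = ∫ s in (0:ℝ)..t, (f₀ s - c) := by
      refine intervalIntegral.integral_congr fun s hs => ?_
      rw [uIcc_of_le ht.1] at hs
      have hs1 : s ∈ Icc (0:ℝ) 1 := hsub t ht hs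
      simp only [hp, hfg₀ s hs1]
      exact max_eq_left (sub_nonneg.mpr (hg₀anti hs1 ht hs.2))
    have e6 : (∫ s in (0:ℝ)..t, (f s - c)) = (∫ s in (0:ℝ)..t, f s) - c * t := by
      rw [intervalIntegral.integral_sub hii intervalIntegrable_const,
        intervalIntegral.integral_const]
      simp [mul_comm]
    have e7 : (∫ s in (0:ℝ)..t, (f₀ s - c)) = (∫ s in (0:ℝ)..t, f₀ s) - c * t := by
      rw [intervalIntegral.integral_sub hii₀ intervalIntegrable_const,
        intervalIntegral.integral_const]
      simp [mul_comm]
    rw [hFTC t ht, hFTC₀ t ht]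
    linarith
  -- conclude by monotonicity of the integral
  have hψcont : ContinuousOn ψ (Icc (0:ℝ) 1) :=
    fun t ht => ((hψd t ht).continuousAt).continuousWithinAt
  have hψ₀cont : ContinuousOn ψ₀ (Icc (0:ℝ) 1) :=
    fun t ht => ((hψ₀d t ht).continuousAt).continuousWithinAt
  exact setIntegral_mono_on hψcont.integrableOn_Icc hψ₀cont.integrableOn_Icc
    measurableSet_Icc hpt
end
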